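/- arXiv:1512.03663 — 2 statements merged into one kernel-verified Lean document; each statement's English description precedes it below -/
import Mathlib

section
/- Let (X(t))_{t∈ℝ^d} be a measurable stationary random field, f, g : ℝ → ℝ measurable with E[f(X(0))²] < ∞, E[g(X(0))²] < ∞, and ∫_{ℝ^d} |Cov(f(X(0)), g(X(t)))| dt < ∞. Let (W_n) be a Van Hove-growing sequence of compact subsets of ℝ^d. Then lim_{n→∞} (1/λ_d(W_n)) Cov(∫_{W_n} f(X(t)) dt, ∫_{W_n} g(X(t)) dt) = ∫_{ℝ^d} Cov(f(X(0)), g(X(t))) dt. -/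
open MeasureTheory ProbabilityTheory Filter
open scoped Pointwise

open Metric
open scoped ENNReal

lemma crossing (W : Set (EuclideanSpace ℝ (Fin d))) (hW : IsClosed W)
    (x u : EuclideanSpace ℝ (Fin d)) (hx : x ∈ W) (hxu : x + u ∉ W) :
    x ∈ frontier W + closedBall (0 : EuclideanSpace ℝ (Fin d)) ‖u‖ := by
  have hseg : ∃ y ∈ segment ℝ x (x + u), y ∈ frontier W := by
    by_contra hfr
    push_neg at hfr
    have hconn : IsPreconnected (segment ℝ x (x + u)) := (convex_segment x (x+u)).isPreconnected
    have hx' : x ∈ interior W := by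
      have h2 := hfr x (left_mem_segment ℝ x (x+u))
      rw [frontier, hW.closure_eq] at h2
      simp only [Set.mem_diff, not_and, not_not] at h2
      exact h2 hx
    have hxu' : x + u ∈ (closure W)ᶜ := by
      rw [hW.closure_eq]; exact hxu
    have hsub : segment ℝ x (x + u) ⊆ interior W ∪ (closure W)ᶜ := by
      intro z hz
      by_cases h : z ∈ closure W
      · left
        have h2 := hfr z hz
        rw [frontier] at h2
        simp only [Set.mem_diff, not_and, not_not] at h2
        exact h2 h
      · exact Or.inr h
    obtain ⟨z, _, hz1, hz2⟩ := hconn _ _ isOpen_interior isClosed_closure.isOpen_compl hsub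
      ⟨x, left_mem_segment ℝ x (x+u), hx'⟩ ⟨x + u, right_mem_segment ℝ x (x+u), hxu'⟩
    exact hz2 (subset_closure (interior_subset hz1))
  obtain ⟨y, hyseg, hyfr⟩ := hseg
  refine ⟨y, hyfr, x - y, ?_, by module⟩
  rw [mem_closedBall, dist_zero_right, ← dist_eq_norm]
  have h3 := dist_add_dist_of_mem_segment hyseg
  have h4 : dist x (x + u) = ‖u‖ := by
    rw [dist_eq_norm]; simp
  linarith [dist_nonneg (x := y) (y := x + u)]

lemma covering (R : ℝ) : ∃ N : ℕ, ∀ S : Set (EuclideanSpace ℝ (Fin d)),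
    volume (S + closedBall (0 : EuclideanSpace ℝ (Fin d)) R)
      ≤ N * volume (S + closedBall (0 : EuclideanSpace ℝ (Fin d)) 1) := by
  obtain ⟨T, hT⟩ := (isCompact_closedBall (0 : EuclideanSpace ℝ (Fin d)) R).elim_finite_subcover
    (fun c => ball c 1) (fun c => isOpen_ball)
    (fun x hx => Set.mem_iUnion.2 ⟨x, mem_ball_self one_pos⟩)
  refine ⟨T.card, fun S => ?_⟩
  have hsub : S + closedBall (0 : EuclideanSpace ℝ (Fin d)) R ⊆
      ⋃ c ∈ T, (c +ᵥ (S + closedBall (0 : EuclideanSpace ℝ (Fin d)) 1)) := by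
    rintro z ⟨s, hs, b, hb, rfl⟩
    obtain ⟨c, hc, hbc⟩ := Set.mem_iUnion₂.1 (hT hb)
    refine Set.mem_biUnion hc ?_
    refine ⟨s + (b - c), ⟨s, hs, b - c, ?_, rfl⟩, ?_⟩
    · rw [mem_closedBall, dist_zero_right]
      exact le_of_lt (by rwa [mem_ball, dist_eq_norm] at hbc)
    · simp only [vadd_eq_add]; module
  calc volume (S + closedBall (0 : EuclideanSpace ℝ (Fin d)) R)
      ≤ volume (⋃ c ∈ T, (c +ᵥ (S + closedBall (0 : EuclideanSpace ℝ (Fin d)) 1))) :=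
        measure_mono hsub
    _ ≤ ∑ c ∈ T, volume (c +ᵥ (S + closedBall (0 : EuclideanSpace ℝ (Fin d)) 1)) :=
        measure_biUnion_finset_le T _
    _ = T.card * volume (S + closedBall (0 : EuclideanSpace ℝ (Fin d)) 1) := by
        simp [measure_vadd]

lemma ratio_tendsto_one (W : ℕ → Set (EuclideanSpace ℝ (Fin d)))
    (hcomp : ∀ n, IsCompact (W n))
    (hpos : ∀ᶠ n in atTop, 0 < volume (W n))
    (hVH : Tendsto
      (fun n => (volume (frontier (W n) + closedBall (0 : EuclideanSpace ℝ (Fin d)) 1)).toReal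
        / (volume (W n)).toReal) atTop (nhds 0))
    (u : EuclideanSpace ℝ (Fin d)) :
    Tendsto (fun n => (volume (W n ∩ (· + u) ⁻¹' (W n))).toReal / (volume (W n)).toReal)
      atTop (nhds 1) := by
  obtain ⟨N, hN⟩ := covering (d := d) ‖u‖
  -- facts for each n
  have hWfin : ∀ n, volume (W n) ≠ ∞ := fun n => (hcomp n).measure_lt_top.ne
  have hAmeas : ∀ n, MeasurableSet ((· + u) ⁻¹' (W n)) := fun n =>
    ((hcomp n).isClosed.preimage (continuous_id.add continuous_const)).measurableSet
  have hfrfin : ∀ n, volume (frontier (W n) + closedBall (0 : EuclideanSpace ℝ (Fin d)) 1) ≠ ∞ := by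
    intro n
    refine (measure_mono (Set.add_subset_add_right ?_) |>.trans_lt
      ((hcomp n).add (isCompact_closedBall _ _)).measure_lt_top).ne
    exact fun x hx => (hcomp n).isClosed.frontier_subset hx
  have hdiff_sub : ∀ n, W n \ (· + u) ⁻¹' (W n) ⊆
      frontier (W n) + closedBall (0 : EuclideanSpace ℝ (Fin d)) ‖u‖ := by
    rintro n x ⟨hx1, hx2⟩
    exact crossing (W n) (hcomp n).isClosed x u hx1 hx2
  have hdiff_le : ∀ n, (volume (W n \ (· + u) ⁻¹' (W n))).toReal ≤
      N * (volume (frontier (W n) + closedBall (0 : EuclideanSpace ℝ (Fin d)) 1)).toReal := by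
    intro n
    have h1 : volume (W n \ (· + u) ⁻¹' (W n)) ≤
        N * volume (frontier (W n) + closedBall (0 : EuclideanSpace ℝ (Fin d)) 1) :=
      (measure_mono (hdiff_sub n)).trans (hN _)
    have h2 : (N : ℝ≥0∞) * volume (frontier (W n) + closedBall (0 : EuclideanSpace ℝ (Fin d)) 1) ≠ ∞ :=
      ENNReal.mul_ne_top (by simp) (hfrfin n)
    calc (volume (W n \ (· + u) ⁻¹' (W n))).toReal
        ≤ ((N : ℝ≥0∞) * volume (frontier (W n) + closedBall (0 : EuclideanSpace ℝ (Fin d)) 1)).toReal :=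
          ENNReal.toReal_mono h2 h1
      _ = N * (volume (frontier (W n) + closedBall (0 : EuclideanSpace ℝ (Fin d)) 1)).toReal := by
          rw [ENNReal.toReal_mul]; simp
  have hdiff0 : Tendsto (fun n => (volume (W n \ (· + u) ⁻¹' (W n))).toReal
      / (volume (W n)).toReal) atTop (nhds 0) := by
    have hg : Tendsto (fun _ : ℕ => (0 : ℝ)) atTop (nhds 0) := tendsto_const_nhds
    have hh : Tendsto (fun n => N * ((volume (frontier (W n) + closedBall (0 : EuclideanSpace ℝ (Fin d)) 1)).toReal
        / (volume (W n)).toReal)) atTop (nhds 0) := by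
      have := hVH.const_mul (N : ℝ)
      rwa [mul_zero] at this
    refine tendsto_of_tendsto_of_tendsto_of_le_of_le' hg hh ?_ ?_
    · exact Eventually.of_forall fun n => div_nonneg ENNReal.toReal_nonneg ENNReal.toReal_nonneg
    · filter_upwards [hpos] with n hn
      have hc : (0 : ℝ) < (volume (W n)).toReal := ENNReal.toReal_pos hn.ne' (hWfin n)
      rw [mul_div_assoc']
      gcongr
      exact hdiff_le n
  have hkey : ∀ᶠ n in atTop, (volume (W n ∩ (· + u) ⁻¹' (W n))).toReal / (volume (W n)).toReal
      = 1 - (volume (W n \ (· + u) ⁻¹' (W n))).toReal / (volume (W n)).toReal := by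
    filter_upwards [hpos] with n hn
    have hc : (0 : ℝ) < (volume (W n)).toReal := ENNReal.toReal_pos hn.ne' (hWfin n)
    have hsplit : volume (W n ∩ (· + u) ⁻¹' (W n)) + volume (W n \ (· + u) ⁻¹' (W n))
        = volume (W n) := measure_inter_add_diff (W n) (hAmeas n)
    have hIfin : volume (W n ∩ (· + u) ⁻¹' (W n)) ≠ ∞ :=
      ((measure_mono Set.inter_subset_left).trans_lt (hcomp n).measure_lt_top).ne
    have hDfin : volume (W n \ (· + u) ⁻¹' (W n)) ≠ ∞ :=
      ((measure_mono Set.diff_subset).trans_lt (hcomp n).measure_lt_top).ne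
    have hr : (volume (W n ∩ (· + u) ⁻¹' (W n))).toReal
        + (volume (W n \ (· + u) ⁻¹' (W n))).toReal = (volume (W n)).toReal := by
      rw [← ENNReal.toReal_add hIfin hDfin, hsplit]
    field_simp
    linarith
  have hfinal : Tendsto (fun n => 1 - (volume (W n \ (· + u) ⁻¹' (W n))).toReal
      / (volume (W n)).toReal) atTop (nhds 1) := by
    have := (tendsto_const_nhds (x := (1:ℝ)) (f := atTop (α := ℕ))).sub hdiff0
    rwa [sub_zero] at this
  exact Tendsto.congr' (hkey.mono fun n h => h.symm) hfinal


section prob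
variable {d : ℕ} {Ω : Type*} [MeasureSpace Ω] [IsProbabilityMeasure (volume : Measure Ω)]
variable (X : EuclideanSpace ℝ (Fin d) → Ω → ℝ)

lemma pair_ident
    (hstat : ∀ (n : ℕ) (ts : Fin n → EuclideanSpace ℝ (Fin d)) (u : EuclideanSpace ℝ (Fin d)),
      IdentDistrib (fun ω => fun i => X (ts i) ω) (fun ω => fun i => X (ts i + u) ω)
        volume volume)
    (s t : EuclideanSpace ℝ (Fin d)) :
    IdentDistrib (fun ω => (X 0 ω, X (t - s) ω)) (fun ω => (X s ω, X t ω)) volume volume := by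
  have h := (hstat 2 ![0, t - s] s).comp
    (u := fun v : Fin 2 → ℝ => (v 0, v 1))
    ((measurable_pi_apply 0).prodMk (measurable_pi_apply 1))
  simpa [Function.comp_def, Matrix.cons_val_zero, Matrix.cons_val_one, Matrix.head_cons,
    zero_add, sub_add_cancel] using h

lemma single_ident
    (hstat : ∀ (n : ℕ) (ts : Fin n → EuclideanSpace ℝ (Fin d)) (u : EuclideanSpace ℝ (Fin d)),
      IdentDistrib (fun ω => fun i => X (ts i) ω) (fun ω => fun i => X (ts i + u) ω)
        volume volume)
    (s : EuclideanSpace ℝ (Fin d)) :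
    IdentDistrib (X 0) (X s) volume volume := by
  have h := (pair_ident X hstat s s).comp (u := Prod.fst) measurable_fst
  simpa [Function.comp_def, sub_self] using h

lemma integrable_of_fiber_bound {α : Type*} [MeasurableSpace α] (ρ : Measure α)
    [IsFiniteMeasure ρ] (H : α → Ω → ℝ) (hmeas : Measurable (Function.uncurry H))
    (c : ℝ≥0∞) (hc : c ≠ ∞) (hb : ∀ a, ∫⁻ ω, ‖H a ω‖₊ ∂(volume : Measure Ω) ≤ c) :
    Integrable (Function.uncurry H) (ρ.prod (volume : Measure Ω)) := by
  refine ⟨hmeas.aestronglyMeasurable, ?_⟩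
  simp only [HasFiniteIntegral]
  rw [lintegral_prod _ (by exact (hmeas.nnnorm.coe_nnreal_ennreal).aemeasurable)]
  calc ∫⁻ a, ∫⁻ ω, ‖H a ω‖₊ ∂(volume : Measure Ω) ∂ρ ≤ ∫⁻ _, c ∂ρ :=
        lintegral_mono fun a => hb a
    _ = c * ρ Set.univ := lintegral_const c
    _ < ∞ := ENNReal.mul_lt_top hc.lt_top (measure_lt_top ρ _)

lemma main_identity
    (hXmeas : Measurable fun p : EuclideanSpace ℝ (Fin d) × Ω => X p.1 p.2)
    (hstat : ∀ (n : ℕ) (ts : Fin n → EuclideanSpace ℝ (Fin d)) (u : EuclideanSpace ℝ (Fin d)),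
      IdentDistrib (fun ω => fun i => X (ts i) ω) (fun ω => fun i => X (ts i + u) ω)
        volume volume)
    (f g : ℝ → ℝ) (hf : Measurable f) (hg : Measurable g)
    (hf2 : Integrable (fun ω => (f (X 0 ω)) ^ 2))
    (hg2 : Integrable (fun ω => (g (X 0 ω)) ^ 2))
    (Cov : EuclideanSpace ℝ (Fin d) → ℝ)
    (hCov : ∀ t, Cov t =
      ∫ ω, (f (X 0 ω) - ∫ ω', f (X 0 ω')) * (g (X t ω) - ∫ ω', g (X t ω')))
    (hCovInt : Integrable (fun t => |Cov t|))
    (W : Set (EuclideanSpace ℝ (Fin d))) (hWc : IsCompact W) :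
    ∫ ω, ((∫ t in W, f (X t ω)) - ∫ ω', ∫ t in W, f (X t ω'))
        * ((∫ t in W, g (X t ω)) - ∫ ω', ∫ t in W, g (X t ω'))
      = ∫ u, Cov u * (volume (W ∩ (· + u) ⁻¹' W)).toReal := by
  have hWmeas : MeasurableSet W := hWc.isClosed.measurableSet
  set μ : Measure (EuclideanSpace ℝ (Fin d)) := volume with hμ
  set P : Measure Ω := volume with hP
  set ν : Measure (EuclideanSpace ℝ (Fin d)) := μ.restrict W with hν
  haveI : IsFiniteMeasure ν := ⟨by
    rw [hν, Measure.restrict_apply_univ]; exact hWc.measure_lt_top⟩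
  set mf := ∫ ω, f (X 0 ω) with hmf
  set mg := ∫ ω, g (X 0 ω) with hmg
  have hXt : ∀ t, Measurable (X t) := fun t => hXmeas.comp measurable_prodMk_left
  have hfXmeas : Measurable (fun p : EuclideanSpace ℝ (Fin d) × Ω => f (X p.1 p.2)) :=
    hf.comp hXmeas
  have hgXmeas : Measurable (fun p : EuclideanSpace ℝ (Fin d) × Ω => g (X p.1 p.2)) :=
    hg.comp hXmeas
  have idf : ∀ t, IdentDistrib (fun ω => f (X 0 ω)) (fun ω => f (X t ω)) P P :=
    fun t => (single_ident X hstat t).comp hf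
  have idg : ∀ t, IdentDistrib (fun ω => g (X 0 ω)) (fun ω => g (X t ω)) P P :=
    fun t => (single_ident X hstat t).comp hg
  have hfL2 : MemLp (fun ω => f (X 0 ω)) 2 P :=
    (memLp_two_iff_integrable_sq (hf.comp (hXt 0)).aestronglyMeasurable).2 hf2
  have hgL2 : MemLp (fun ω => g (X 0 ω)) 2 P :=
    (memLp_two_iff_integrable_sq (hg.comp (hXt 0)).aestronglyMeasurable).2 hg2
  have hfL1 : Integrable (fun ω => f (X 0 ω)) P := hfL2.integrable one_le_two
  have hgL1 : Integrable (fun ω => g (X 0 ω)) P := hgL2.integrable one_le_two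
  have hmeanf : ∀ t, (∫ ω, f (X t ω)) = mf := fun t => ((idf t).integral_eq).symm
  have hmeang : ∀ t, (∫ ω, g (X t ω)) = mg := fun t => ((idg t).integral_eq).symm
  -- centered L² facts
  have hFL2 : MemLp (fun ω => f (X 0 ω) - mf) 2 P := hfL2.sub (memLp_const mf)
  have hGL2 : MemLp (fun ω => g (X 0 ω) - mg) 2 P := hgL2.sub (memLp_const mg)
  have hFL1 : Integrable (fun ω => f (X 0 ω) - mf) P := hfL1.sub (integrable_const mf)
  have hGL1 : Integrable (fun ω => g (X 0 ω) - mg) P := hgL1.sub (integrable_const mg)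
  set CF := ∫⁻ ω, (‖f (X 0 ω) - mf‖₊ : ℝ≥0∞) ^ 2 ∂P with hCF_def
  set CG := ∫⁻ ω, (‖g (X 0 ω) - mg‖₊ : ℝ≥0∞) ^ 2 ∂P with hCG_def
  have hCF : CF ≠ ∞ := by
    have h2 : Integrable (fun ω => (f (X 0 ω) - mf) ^ 2) P := hFL2.integrable_sq
    have h3 := h2.2
    simp only [HasFiniteIntegral] at h3
    refine ne_of_lt (lt_of_le_of_lt (le_of_eq (lintegral_congr fun ω => ?_)) h3)
    rw [← ENNReal.coe_pow, ← nnnorm_pow, enorm_eq_nnnorm]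
  have hCG : CG ≠ ∞ := by
    have h2 : Integrable (fun ω => (g (X 0 ω) - mg) ^ 2) P := hGL2.integrable_sq
    have h3 := h2.2
    simp only [HasFiniteIntegral] at h3
    refine ne_of_lt (lt_of_le_of_lt (le_of_eq (lintegral_congr fun ω => ?_)) h3)
    rw [← ENNReal.coe_pow, ← nnnorm_pow, enorm_eq_nnnorm]
  set cF := ∫⁻ ω, (‖f (X 0 ω) - mf‖₊ : ℝ≥0∞) ∂P with hcF_def
  set cG := ∫⁻ ω, (‖g (X 0 ω) - mg‖₊ : ℝ≥0∞) ∂P with hcG_def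
  set cf := ∫⁻ ω, (‖f (X 0 ω)‖₊ : ℝ≥0∞) ∂P with hcf_def
  set cg := ∫⁻ ω, (‖g (X 0 ω)‖₊ : ℝ≥0∞) ∂P with hcg_def
  have hcF : cF ≠ ∞ := by
    have h3 := hFL1.2; simp only [HasFiniteIntegral] at h3; exact h3.ne
  have hcG : cG ≠ ∞ := by
    have h3 := hGL1.2; simp only [HasFiniteIntegral] at h3; exact h3.ne
  have hcf : cf ≠ ∞ := by
    have h3 := hfL1.2; simp only [HasFiniteIntegral] at h3; exact h3.ne
  have hcg : cg ≠ ∞ := by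
    have h3 := hgL1.2; simp only [HasFiniteIntegral] at h3; exact h3.ne
  -- fiber identities via stationarity
  have fibF2 : ∀ t, ∫⁻ ω, (‖f (X t ω) - mf‖₊ : ℝ≥0∞) ^ 2 ∂P = CF := fun t =>
    (((idf t).comp (u := fun x : ℝ => ((‖x - mf‖₊ : ℝ≥0∞)) ^ 2)
      (((measurable_id.sub_const mf).nnnorm.coe_nnreal_ennreal).pow_const 2)).lintegral_eq).symm
  have fibG2 : ∀ t, ∫⁻ ω, (‖g (X t ω) - mg‖₊ : ℝ≥0∞) ^ 2 ∂P = CG := fun t =>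
    (((idg t).comp (u := fun x : ℝ => ((‖x - mg‖₊ : ℝ≥0∞)) ^ 2)
      (((measurable_id.sub_const mg).nnnorm.coe_nnreal_ennreal).pow_const 2)).lintegral_eq).symm
  have fibF1 : ∀ t, ∫⁻ ω, (‖f (X t ω) - mf‖₊ : ℝ≥0∞) ∂P = cF := fun t =>
    (((idf t).comp (u := fun x : ℝ => ((‖x - mf‖₊ : ℝ≥0∞)))
      ((measurable_id.sub_const mf).nnnorm.coe_nnreal_ennreal)).lintegral_eq).symm
  have fibG1 : ∀ t, ∫⁻ ω, (‖g (X t ω) - mg‖₊ : ℝ≥0∞) ∂P = cG := fun t =>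
    (((idg t).comp (u := fun x : ℝ => ((‖x - mg‖₊ : ℝ≥0∞)))
      ((measurable_id.sub_const mg).nnnorm.coe_nnreal_ennreal)).lintegral_eq).symm
  have fibf1 : ∀ t, ∫⁻ ω, (‖f (X t ω)‖₊ : ℝ≥0∞) ∂P = cf := fun t =>
    (((idf t).comp (u := fun x : ℝ => ((‖x‖₊ : ℝ≥0∞)))
      measurable_id.nnnorm.coe_nnreal_ennreal).lintegral_eq).symm
  have fibg1 : ∀ t, ∫⁻ ω, (‖g (X t ω)‖₊ : ℝ≥0∞) ∂P = cg := fun t =>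
    (((idg t).comp (u := fun x : ℝ => ((‖x‖₊ : ℝ≥0∞)))
      measurable_id.nnnorm.coe_nnreal_ennreal).lintegral_eq).symm
  -- product integrability
  have intf_raw : Integrable (Function.uncurry fun t ω => f (X t ω)) (ν.prod P) :=
    integrable_of_fiber_bound ν _ hfXmeas cf hcf (fun a => le_of_eq (fibf1 a))
  have intg_raw : Integrable (Function.uncurry fun t ω => g (X t ω)) (ν.prod P) :=
    integrable_of_fiber_bound ν _ hgXmeas cg hcg (fun a => le_of_eq (fibg1 a))
  have intF : Integrable (Function.uncurry fun t ω => f (X t ω) - mf) (ν.prod P) :=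
    integrable_of_fiber_bound ν _ (hfXmeas.sub_const mf) cF hcF (fun a => le_of_eq (fibF1 a))
  have intG : Integrable (Function.uncurry fun t ω => g (X t ω) - mg) (ν.prod P) :=
    integrable_of_fiber_bound ν _ (hgXmeas.sub_const mg) cG hcG (fun a => le_of_eq (fibG1 a))
  have mul_le_sq : ∀ x y : ℝ≥0∞, x * y ≤ x ^ 2 + y ^ 2 := by
    intro x y
    rcases le_total x y with h | h
    · calc x * y ≤ y * y := mul_le_mul_left h y
        _ = y ^ 2 := (sq y).symm
        _ ≤ x ^ 2 + y ^ 2 := le_add_self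
    · calc x * y ≤ x * x := mul_le_mul_right h x
        _ = x ^ 2 := (sq x).symm
        _ ≤ x ^ 2 + y ^ 2 := le_self_add
  have intFG : Integrable (Function.uncurry fun (st : EuclideanSpace ℝ (Fin d) × EuclideanSpace ℝ (Fin d)) ω =>
      (f (X st.1 ω) - mf) * (g (X st.2 ω) - mg)) ((ν.prod ν).prod P) := by
    refine integrable_of_fiber_bound (ν.prod ν) _ ?_ (CF + CG) ?_ ?_
    · exact ((hf.comp (hXmeas.comp ((measurable_fst.comp measurable_fst).prodMk
        measurable_snd))).sub_const mf).mul
        ((hg.comp (hXmeas.comp ((measurable_snd.comp measurable_fst).prodMk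
        measurable_snd))).sub_const mg)
    · exact ENNReal.add_ne_top.2 ⟨hCF, hCG⟩
    · rintro ⟨s, t⟩
      calc ∫⁻ ω, (‖(f (X s ω) - mf) * (g (X t ω) - mg)‖₊ : ℝ≥0∞) ∂P
          = ∫⁻ ω, (‖f (X s ω) - mf‖₊ : ℝ≥0∞) * (‖g (X t ω) - mg‖₊ : ℝ≥0∞) ∂P := by
            apply lintegral_congr; intro ω; rw [nnnorm_mul, ENNReal.coe_mul]
        _ ≤ ∫⁻ ω, ((‖f (X s ω) - mf‖₊ : ℝ≥0∞) ^ 2 + (‖g (X t ω) - mg‖₊ : ℝ≥0∞) ^ 2) ∂P :=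
            lintegral_mono fun ω => mul_le_sq _ _
        _ = CF + CG := by
            have hFm : Measurable fun ω => (‖f (X s ω) - mf‖₊ : ℝ≥0∞) ^ 2 := by
              exact (((hf.comp (hXt s)).sub_const mf).nnnorm.coe_nnreal_ennreal).pow_const 2
            rw [lintegral_add_left hFm, fibF2 s, fibG2 t]
  -- swap lemmas and means of set integrals
  have intf_swap : Integrable (Function.uncurry fun ω t => f (X t ω)) (P.prod ν) := intf_raw.swap
  have intg_swap : Integrable (Function.uncurry fun ω t => g (X t ω)) (P.prod ν) := intg_raw.swap
  have step1f : (∫ ω', ∫ t in W, f (X t ω')) = (μ W).toReal • mf := by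
    calc (∫ ω', ∫ t in W, f (X t ω'))
        = ∫ t, (∫ ω, f (X t ω) ∂P) ∂ν := integral_integral_swap intf_swap
      _ = ∫ _t, mf ∂ν := integral_congr_ae (Eventually.of_forall fun t => hmeanf t)
      _ = (ν Set.univ).toReal • mf := integral_const mf
      _ = (μ W).toReal • mf := by rw [hν, Measure.restrict_apply_univ]
  have step1g : (∫ ω', ∫ t in W, g (X t ω')) = (μ W).toReal • mg := by
    calc (∫ ω', ∫ t in W, g (X t ω'))
        = ∫ t, (∫ ω, g (X t ω) ∂P) ∂ν := integral_integral_swap intg_swap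
      _ = ∫ _t, mg ∂ν := integral_congr_ae (Eventually.of_forall fun t => hmeang t)
      _ = (ν Set.univ).toReal • mg := integral_const mg
      _ = (μ W).toReal • mg := by rw [hν, Measure.restrict_apply_univ]
  have aef : ∀ᵐ ω ∂P, Integrable (fun t => f (X t ω)) ν := intf_raw.prod_left_ae
  have aeg : ∀ᵐ ω ∂P, Integrable (fun t => g (X t ω)) ν := intg_raw.prod_left_ae
  have hconst : ∀ c : ℝ, (∫ _t, c ∂ν) = (μ W).toReal • c := by
    intro c; rw [integral_const, measureReal_def, hν, Measure.restrict_apply_univ]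
  have step3 : ∀ᵐ ω ∂P, ((∫ t in W, f (X t ω)) - ∫ ω', ∫ t in W, f (X t ω'))
      * ((∫ t in W, g (X t ω)) - ∫ ω', ∫ t in W, g (X t ω'))
      = (∫ t, (f (X t ω) - mf) ∂ν) * (∫ t, (g (X t ω) - mg) ∂ν) := by
    filter_upwards [aef, aeg] with ω hfo hgo
    rw [integral_sub hfo (integrable_const mf), integral_sub hgo (integrable_const mg),
      hconst mf, hconst mg, step1f, step1g]
  have step7 : ∀ s t : EuclideanSpace ℝ (Fin d),
      (∫ ω, (f (X s ω) - mf) * (g (X t ω) - mg) ∂P) = Cov (t - s) := by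
    intro s t
    have hφ : Measurable fun q : ℝ × ℝ => (q.1 - mf) * (q.2 - mg) :=
      (measurable_fst.sub_const mf).mul (measurable_snd.sub_const mg)
    have h := ((pair_ident X hstat s t).comp
      (u := fun q : ℝ × ℝ => (f q.1 - mf) * (g q.2 - mg))
      (((hf.comp measurable_fst).sub_const mf).mul ((hg.comp measurable_snd).sub_const mg))).integral_eq
    rw [hCov (t - s), hmeang (t - s)]
    exact h.symm
  have lhs_eq : (∫ ω, ((∫ t in W, f (X t ω)) - ∫ ω', ∫ t in W, f (X t ω'))
        * ((∫ t in W, g (X t ω)) - ∫ ω', ∫ t in W, g (X t ω')))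
      = ∫ st, Cov (st.2 - st.1) ∂(ν.prod ν) := by
    calc (∫ ω, ((∫ t in W, f (X t ω)) - ∫ ω', ∫ t in W, f (X t ω'))
        * ((∫ t in W, g (X t ω)) - ∫ ω', ∫ t in W, g (X t ω')))
        = ∫ ω, (∫ t, (f (X t ω) - mf) ∂ν) * (∫ t, (g (X t ω) - mg) ∂ν) ∂P :=
          integral_congr_ae step3
      _ = ∫ ω, (∫ st, (f (X st.1 ω) - mf) * (g (X st.2 ω) - mg) ∂(ν.prod ν)) ∂P := by
          refine integral_congr_ae (Eventually.of_forall fun ω => ?_)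
          exact (integral_prod_mul (fun t => f (X t ω) - mf) (fun t => g (X t ω) - mg)).symm
      _ = ∫ st, (∫ ω, (f (X st.1 ω) - mf) * (g (X st.2 ω) - mg) ∂P) ∂(ν.prod ν) :=
          integral_integral_swap intFG.swap
      _ = ∫ st, Cov (st.2 - st.1) ∂(ν.prod ν) :=
          integral_congr_ae (Eventually.of_forall fun st => step7 st.1 st.2)
  -- Cov measurability and integrability
  have hCovSM : StronglyMeasurable Cov := by
    have hm : Measurable (Function.uncurry fun (t : EuclideanSpace ℝ (Fin d)) ω =>
        (f (X 0 ω) - mf) * (g (X t ω) - mg)) :=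
      ((hf.comp ((hXt 0).comp measurable_snd)).sub_const mf).mul ((hg.comp hXmeas).sub_const mg)
    have h2 := hm.stronglyMeasurable.integral_prod_right (ν := P)
    have heq : Cov = fun t => ∫ ω, (f (X 0 ω) - mf) * (g (X t ω) - mg) ∂P := by
      funext t; rw [hCov t, hmeang t]
    rw [heq]; exact h2
  set C := ∫⁻ u, (‖Cov u‖₊ : ℝ≥0∞) ∂μ with hC_def
  have hC : C ≠ ∞ := by
    have h3 := hCovInt.2; simp only [HasFiniteIntegral] at h3
    refine ne_of_lt (lt_of_le_of_lt (le_of_eq (lintegral_congr fun u => ?_)) h3)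
    simp; exact (enorm_eq_nnnorm _).symm
  have hcovshift : ∀ s : EuclideanSpace ℝ (Fin d),
      ∫⁻ t, (‖Cov (t - s)‖₊ : ℝ≥0∞) ∂μ = C := fun s =>
    lintegral_sub_right_eq_self (fun t => (‖Cov t‖₊ : ℝ≥0∞)) s
  have intCovProd : Integrable (fun st : EuclideanSpace ℝ (Fin d) × EuclideanSpace ℝ (Fin d) =>
      Cov (st.2 - st.1)) (ν.prod ν) := by
    have hm : Measurable fun st : EuclideanSpace ℝ (Fin d) × EuclideanSpace ℝ (Fin d) =>
        Cov (st.2 - st.1) := hCovSM.measurable.comp (measurable_snd.sub measurable_fst)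
    refine ⟨hm.aestronglyMeasurable, ?_⟩
    simp only [HasFiniteIntegral]
    rw [lintegral_prod _ (by exact hm.nnnorm.coe_nnreal_ennreal.aemeasurable)]
    calc ∫⁻ s, (∫⁻ t, (‖Cov (t - s)‖₊ : ℝ≥0∞) ∂ν) ∂ν
        ≤ ∫⁻ _s, C ∂ν := by
          refine lintegral_mono fun s => ?_
          calc ∫⁻ t, (‖Cov (t - s)‖₊ : ℝ≥0∞) ∂ν
              ≤ ∫⁻ t, (‖Cov (t - s)‖₊ : ℝ≥0∞) ∂μ :=
                lintegral_mono' Measure.restrict_le_self le_rfl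
            _ = C := hcovshift s
      _ = C * ν Set.univ := lintegral_const C
      _ < ∞ := ENNReal.mul_lt_top hC.lt_top (measure_lt_top ν _)
  have step8 : ∫ st, Cov (st.2 - st.1) ∂(ν.prod ν) = ∫ s, (∫ t, Cov (t - s) ∂ν) ∂ν :=
    integral_prod _ intCovProd
  have step9 : ∀ s : EuclideanSpace ℝ (Fin d), (∫ t, Cov (t - s) ∂ν)
      = ∫ u, Set.indicator ((fun v => v + s) ⁻¹' W) Cov u ∂μ := by
    intro s
    rw [hν, ← integral_indicator hWmeas,
      ← integral_add_right_eq_self (fun t => W.indicator (fun t' => Cov (t' - s)) t) s]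
    refine integral_congr_ae (Eventually.of_forall fun u => ?_)
    show W.indicator (fun t' => Cov (t' - s)) (u + s) = _
    by_cases h : u + s ∈ W
    · rw [Set.indicator_of_mem h, Set.indicator_of_mem (by exact h), add_sub_cancel_right]
    · rw [Set.indicator_of_notMem h, Set.indicator_of_notMem (by exact h)]
  have hJmeas : Measurable (Function.uncurry fun (s : EuclideanSpace ℝ (Fin d)) u =>
      Set.indicator ((fun v => v + s) ⁻¹' W) Cov u) := by
    have heq : (Function.uncurry fun (s : EuclideanSpace ℝ (Fin d)) u =>
        Set.indicator ((fun v => v + s) ⁻¹' W) Cov u)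
        = Set.indicator ((fun p : EuclideanSpace ℝ (Fin d) × EuclideanSpace ℝ (Fin d) =>
            p.2 + p.1) ⁻¹' W) (fun p => Cov p.2) := by
      funext p
      rcases p with ⟨s, u⟩
      by_cases h : u + s ∈ W
      · rw [Function.uncurry]
        rw [Set.indicator_of_mem (by exact h), Set.indicator_of_mem (by exact h)]
      · rw [Function.uncurry]
        rw [Set.indicator_of_notMem (by exact h), Set.indicator_of_notMem (by exact h)]
    rw [heq]
    exact (hCovSM.measurable.comp measurable_snd).indicator
      ((measurable_snd.add measurable_fst) hWmeas)
  have intJ : Integrable (Function.uncurry fun (s : EuclideanSpace ℝ (Fin d)) u =>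
      Set.indicator ((fun v => v + s) ⁻¹' W) Cov u) (ν.prod μ) := by
    refine ⟨hJmeas.aestronglyMeasurable, ?_⟩
    simp only [HasFiniteIntegral]
    rw [lintegral_prod _ (by exact hJmeas.nnnorm.coe_nnreal_ennreal.aemeasurable)]
    calc ∫⁻ s, (∫⁻ u, (‖Set.indicator ((fun v => v + s) ⁻¹' W) Cov u‖₊ : ℝ≥0∞) ∂μ) ∂ν
        ≤ ∫⁻ _s, C ∂ν := by
          refine lintegral_mono fun s => ?_
          refine le_trans (lintegral_mono fun u => ?_) (le_of_eq rfl)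
          · by_cases h : u ∈ (fun v => v + s) ⁻¹' W
            · rw [Set.indicator_of_mem h]
            · rw [Set.indicator_of_notMem h]; simp
      _ = C * ν Set.univ := lintegral_const C
      _ < ∞ := ENNReal.mul_lt_top hC.lt_top (measure_lt_top ν _)
  have step10 : ∫ s, (∫ u, Set.indicator ((fun v => v + s) ⁻¹' W) Cov u ∂μ) ∂ν
      = ∫ u, (∫ s, Set.indicator ((fun v => v + s) ⁻¹' W) Cov u ∂ν) ∂μ :=
    integral_integral_swap intJ
  have step11 : ∀ u, (∫ s, Set.indicator ((fun v => v + s) ⁻¹' W) Cov u ∂ν)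
      = Cov u * (μ (W ∩ (· + u) ⁻¹' W)).toReal := by
    intro u
    have hA : MeasurableSet ((fun s => s + u) ⁻¹' W) := (measurable_id.add_const u) hWmeas
    have heq : (fun s => Set.indicator ((fun v => v + s) ⁻¹' W) Cov u)
        = Set.indicator ((fun s => s + u) ⁻¹' W) (fun _ => Cov u) := by
      funext s
      by_cases h : u + s ∈ W
      · rw [Set.indicator_of_mem (by exact h), Set.indicator_of_mem (by
          show s + u ∈ W; rwa [add_comm])]
      · rw [Set.indicator_of_notMem (by exact h), Set.indicator_of_notMem (by
          show s + u ∉ W; rwa [add_comm])]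
    rw [heq, integral_indicator hA, setIntegral_const, measureReal_def, hν, Measure.restrict_apply hA,
      Set.inter_comm, smul_eq_mul, mul_comm]
  rw [lhs_eq, step8,
    integral_congr_ae (Eventually.of_forall fun s => step9 s), step10]
  exact integral_congr_ae (Eventually.of_forall step11)

lemma cov_meas
    (hXmeas : Measurable fun p : EuclideanSpace ℝ (Fin d) × Ω => X p.1 p.2)
    (hstat : ∀ (n : ℕ) (ts : Fin n → EuclideanSpace ℝ (Fin d)) (u : EuclideanSpace ℝ (Fin d)),
      IdentDistrib (fun ω => fun i => X (ts i) ω) (fun ω => fun i => X (ts i + u) ω)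
        volume volume)
    (f g : ℝ → ℝ) (hf : Measurable f) (hg : Measurable g)
    (Cov : EuclideanSpace ℝ (Fin d) → ℝ)
    (hCov : ∀ t, Cov t =
      ∫ ω, (f (X 0 ω) - ∫ ω', f (X 0 ω')) * (g (X t ω) - ∫ ω', g (X t ω'))) :
    Measurable Cov := by
  set P : Measure Ω := volume with hP
  set mf := ∫ ω, f (X 0 ω) with hmf
  set mg := ∫ ω, g (X 0 ω) with hmg
  have hXt : ∀ t, Measurable (X t) := fun t => hXmeas.comp measurable_prodMk_left
  have idg : ∀ t, IdentDistrib (fun ω => g (X 0 ω)) (fun ω => g (X t ω)) P P :=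
    fun t => (single_ident X hstat t).comp hg
  have hmeang : ∀ t, (∫ ω, g (X t ω)) = mg := fun t => ((idg t).integral_eq).symm
  have hm : Measurable (Function.uncurry fun (t : EuclideanSpace ℝ (Fin d)) ω =>
      (f (X 0 ω) - mf) * (g (X t ω) - mg)) :=
    ((hf.comp ((hXt 0).comp measurable_snd)).sub_const mf).mul ((hg.comp hXmeas).sub_const mg)
  have h2 := hm.stronglyMeasurable.integral_prod_right (ν := P)
  have heq : Cov = fun t => ∫ ω, (f (X 0 ω) - mf) * (g (X t ω) - mg) ∂P := by
    funext t; rw [hCov t, hmeang t]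
  rw [heq]; exact h2.measurable
end prob


/-- For a measurable stationary random field `X` and measurable `f, g` with square-integrable
marginals and absolutely integrable covariance function, along any Van Hove-growing sequence
`(W n)` of compact sets,
`(1/λ_d(W n)) Cov(∫_{W n} f(X t) dt, ∫_{W n} g(X t) dt) → ∫_{ℝ^d} Cov(f(X 0), g(X t)) dt`. -/
theorem asymptotic_covariance_limit
    {d : ℕ} {Ω : Type*} [MeasureSpace Ω] [IsProbabilityMeasure (volume : Measure Ω)]
    (X : EuclideanSpace ℝ (Fin d) → Ω → ℝ)
    (hXmeas : Measurable fun p : EuclideanSpace ℝ (Fin d) × Ω => X p.1 p.2)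
    (hstat : ∀ (n : ℕ) (ts : Fin n → EuclideanSpace ℝ (Fin d)) (u : EuclideanSpace ℝ (Fin d)),
      IdentDistrib (fun ω => fun i => X (ts i) ω) (fun ω => fun i => X (ts i + u) ω)
        volume volume)
    (f g : ℝ → ℝ) (hf : Measurable f) (hg : Measurable g)
    (hf2 : Integrable (fun ω => (f (X 0 ω)) ^ 2))
    (hg2 : Integrable (fun ω => (g (X 0 ω)) ^ 2))
    (Cov : EuclideanSpace ℝ (Fin d) → ℝ)
    (hCov : ∀ t, Cov t =
      ∫ ω, (f (X 0 ω) - ∫ ω', f (X 0 ω')) * (g (X t ω) - ∫ ω', g (X t ω')))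
    (hCovInt : Integrable (fun t => |Cov t|))
    (W : ℕ → Set (EuclideanSpace ℝ (Fin d)))
    (hcomp : ∀ n, IsCompact (W n))
    (hpos : ∀ᶠ n in atTop, 0 < volume (W n))
    (hVH : Tendsto
      (fun n => (volume (frontier (W n) + Metric.closedBall (0 : EuclideanSpace ℝ (Fin d)) 1)).toReal
        / (volume (W n)).toReal) atTop (nhds 0)) :
    Tendsto (fun n =>
      (∫ ω, ((∫ t in W n, f (X t ω)) - ∫ ω', ∫ t in W n, f (X t ω'))
        * ((∫ t in W n, g (X t ω)) - ∫ ω', ∫ t in W n, g (X t ω')))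
      / (volume (W n)).toReal)
      atTop (nhds (∫ t, Cov t)) := by
  have hWmeas : ∀ n, MeasurableSet (W n) := fun n => (hcomp n).isClosed.measurableSet
  have hmain : ∀ n, (∫ ω, ((∫ t in W n, f (X t ω)) - ∫ ω', ∫ t in W n, f (X t ω'))
        * ((∫ t in W n, g (X t ω)) - ∫ ω', ∫ t in W n, g (X t ω')))
      = ∫ u, Cov u * (volume (W n ∩ (· + u) ⁻¹' (W n))).toReal :=
    fun n => main_identity X hXmeas hstat f g hf hg hf2 hg2 Cov hCov hCovInt (W n) (hcomp n)
  have hCovMeas : Measurable Cov := cov_meas X hXmeas hstat f g hf hg Cov hCov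
  have hVmeas : ∀ n, Measurable fun u => volume (W n ∩ (· + u) ⁻¹' (W n)) := by
    intro n
    have hs : MeasurableSet {p : EuclideanSpace ℝ (Fin d) × EuclideanSpace ℝ (Fin d) |
        p.2 ∈ W n ∧ p.2 + p.1 ∈ W n} :=
      (measurable_snd (hWmeas n)).inter ((measurable_snd.add measurable_fst) (hWmeas n))
    exact measurable_measure_prodMk_left hs
  have heq : ∀ n, (∫ ω, ((∫ t in W n, f (X t ω)) - ∫ ω', ∫ t in W n, f (X t ω'))
        * ((∫ t in W n, g (X t ω)) - ∫ ω', ∫ t in W n, g (X t ω')))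
      / (volume (W n)).toReal
      = ∫ u, Cov u * (volume (W n ∩ (· + u) ⁻¹' (W n))).toReal / (volume (W n)).toReal := by
    intro n
    rw [hmain n, ← integral_div]
  refine Tendsto.congr (fun n => (heq n).symm) ?_
  refine tendsto_integral_filter_of_dominated_convergence (fun u => |Cov u|) ?_ ?_ hCovInt ?_
  · refine Eventually.of_forall fun n => Measurable.aestronglyMeasurable ?_
    exact (hCovMeas.mul (hVmeas n).ennreal_toReal).div_const _
  · refine Eventually.of_forall fun n => Eventually.of_forall fun u => ?_
    have hfin : volume (W n) ≠ ∞ := (hcomp n).measure_lt_top.ne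
    have h1 : (volume (W n ∩ (· + u) ⁻¹' (W n))).toReal / (volume (W n)).toReal ≤ 1 :=
      div_le_one_of_le₀ (ENNReal.toReal_mono hfin (measure_mono Set.inter_subset_left))
        ENNReal.toReal_nonneg
    have h0 : 0 ≤ (volume (W n ∩ (· + u) ⁻¹' (W n))).toReal / (volume (W n)).toReal :=
      div_nonneg ENNReal.toReal_nonneg ENNReal.toReal_nonneg
    rw [mul_div_assoc, norm_mul, Real.norm_eq_abs, Real.norm_eq_abs,
      abs_of_nonneg h0]
    calc |Cov u| * ((volume (W n ∩ (· + u) ⁻¹' (W n))).toReal / (volume (W n)).toReal)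
        ≤ |Cov u| * 1 := mul_le_mul_of_nonneg_left h1 (abs_nonneg _)
      _ = |Cov u| := mul_one _
  · refine Eventually.of_forall fun u => ?_
    have h := (ratio_tendsto_one W hcomp hpos hVH u).const_mul (Cov u)
    rw [mul_one] at h
    refine h.congr fun n => ?_
    rw [mul_div_assoc]
end

section
/- Let X, Y be bounded real random variables with |X| ≤ S and |Y| ≤ S a.s., and let E₁, E₂ be events such that X·1_{E₁ᶜ} and Y·1_{E₂ᶜ} are independent. Then |Cov(X, Y)| ≤ 6 S² max(ℙ(E₁), ℙ(E₂)). -/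
open MeasureTheory ProbabilityTheory

/-- If `X, Y` are bounded by `S` and `X·1_{E₁ᶜ}` is independent of `Y·1_{E₂ᶜ}`,
then `|Cov(X, Y)| ≤ 6 S² max(ℙ(E₁), ℙ(E₂))`. -/
theorem abs_cov_le_of_indep_off_exceptional
    {Ω : Type*} [MeasureSpace Ω] [IsProbabilityMeasure (volume : Measure Ω)]
    (X Y : Ω → ℝ) (hX : Measurable X) (hY : Measurable Y)
    (S : ℝ) (hS : 0 < S)
    (hXbd : ∀ᵐ ω, |X ω| ≤ S) (hYbd : ∀ᵐ ω, |Y ω| ≤ S)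
    (E₁ E₂ : Set Ω) (hE₁ : MeasurableSet E₁) (hE₂ : MeasurableSet E₂)
    (hindep : IndepFun (fun ω => X ω * E₁ᶜ.indicator (fun _ => (1 : ℝ)) ω)
      (fun ω => Y ω * E₂ᶜ.indicator (fun _ => (1 : ℝ)) ω)) :
    |∫ ω, (X ω - ∫ ω', X ω') * (Y ω - ∫ ω', Y ω')|
      ≤ 6 * S ^ 2 * max (volume E₁).toReal (volume E₂).toReal := by
  have hXn : ∀ᵐ ω, ‖X ω‖ ≤ S := hXbd
  have hYn : ∀ᵐ ω, ‖Y ω‖ ≤ S := hYbd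
  have hXi : Integrable X := (integrable_const S).mono' hX.aestronglyMeasurable hXn
  have hYi : Integrable Y := (integrable_const S).mono' hY.aestronglyMeasurable hYn
  set a := ∫ ω', X ω' with ha
  set b := ∫ ω', Y ω' with hb
  set X' := fun ω => X ω * E₁ᶜ.indicator (fun _ => (1 : ℝ)) ω with hX'def
  set Y' := fun ω => Y ω * E₂ᶜ.indicator (fun _ => (1 : ℝ)) ω with hY'def
  have hind1 : Measurable (E₁ᶜ.indicator (fun _ => (1 : ℝ))) :=
    measurable_const.indicator hE₁.compl
  have hind2 : Measurable (E₂ᶜ.indicator (fun _ => (1 : ℝ))) :=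
    measurable_const.indicator hE₂.compl
  have hX'm : Measurable X' := hX.mul hind1
  have hY'm : Measurable Y' := hY.mul hind2
  have hindle1 : ∀ (s : Set Ω) (ω : Ω), |s.indicator (fun _ => (1 : ℝ)) ω| ≤ 1 := by
    intro s ω
    by_cases h : ω ∈ s <;> simp [Set.indicator_of_mem, Set.indicator_of_notMem, h]
  have hX'n : ∀ᵐ ω, ‖X' ω‖ ≤ S := by
    filter_upwards [hXn] with ω h
    simp only [hX'def, norm_mul, Real.norm_eq_abs]
    calc |X ω| * |E₁ᶜ.indicator (fun _ => (1:ℝ)) ω| ≤ S * 1 :=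
          mul_le_mul h (hindle1 _ _) (abs_nonneg _) hS.le
      _ = S := mul_one S
  have hY'n : ∀ᵐ ω, ‖Y' ω‖ ≤ S := by
    filter_upwards [hYn] with ω h
    simp only [hY'def, norm_mul, Real.norm_eq_abs]
    calc |Y ω| * |E₂ᶜ.indicator (fun _ => (1:ℝ)) ω| ≤ S * 1 :=
          mul_le_mul h (hindle1 _ _) (abs_nonneg _) hS.le
      _ = S := mul_one S
  have hX'i : Integrable X' := (integrable_const S).mono' hX'm.aestronglyMeasurable hX'n
  have hY'i : Integrable Y' := (integrable_const S).mono' hY'm.aestronglyMeasurable hY'n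
  have hXYi : Integrable (fun ω => X ω * Y ω) := by
    refine (integrable_const (S * S)).mono' (hX.mul hY).aestronglyMeasurable ?_
    filter_upwards [hXn, hYn] with ω h1 h2
    simp only [norm_mul]
    exact mul_le_mul h1 h2 (norm_nonneg _) hS.le
  set p1 := (volume E₁).toReal with hp1
  set p2 := (volume E₂).toReal with hp2
  have hp1n : 0 ≤ p1 := ENNReal.toReal_nonneg
  have hp2n : 0 ≤ p2 := ENNReal.toReal_nonneg
  -- expansion of covariance
  have h1 : ∫ ω, (X ω - a) * (Y ω - b) = (∫ ω, X ω * Y ω) - a * b := by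
    have hexp : ∀ ω, (X ω - a) * (Y ω - b)
        = X ω * Y ω - (a * Y ω + (X ω * b - a * b)) := fun ω => by ring
    simp_rw [hexp]
    have i3 : Integrable (fun ω => X ω * b - a * b) := by
      exact (hXi.mul_const b).sub (integrable_const (a*b))
    have i2 : Integrable (fun ω => a * Y ω + (X ω * b - a * b)) := by
      exact (hYi.const_mul a).add i3
    rw [integral_sub hXYi i2,
      integral_add (hYi.const_mul a) i3,
      integral_sub (hXi.mul_const b) (integrable_const (a*b)),
      integral_const_mul, integral_mul_const, integral_const]
    simp only [measure_univ, probReal_univ, ENNReal.toReal_one, one_smul, ← ha, ← hb]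
    ring
  -- independence
  have hAB : ∫ ω, X' ω * Y' ω = (∫ ω, X' ω) * ∫ ω, Y' ω :=
    hindep.integral_fun_mul_eq_mul_integral hX'i.aestronglyMeasurable hY'i.aestronglyMeasurable
  set A := ∫ ω, X' ω with hA
  set B := ∫ ω, Y' ω with hB
  -- |A| ≤ S, |b| ≤ S
  have hAle : |A| ≤ S := by
    calc |A| ≤ ∫ ω, S := norm_integral_le_of_norm_le (integrable_const S) hX'n
      _ = S := by simp
  have hble : |b| ≤ S := by
    calc |b| ≤ ∫ ω, S := norm_integral_le_of_norm_le (integrable_const S) hYn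
      _ = S := by simp
  -- |a - A| ≤ S * p1
  have haA : |a - A| ≤ S * p1 := by
    have hsub : Integrable (fun ω => X ω - X' ω) := hXi.sub hX'i
    have : a - A = ∫ ω, (X ω - X' ω) := (integral_sub hXi hX'i).symm
    rw [this]
    have hbound : ∀ᵐ ω, ‖X ω - X' ω‖ ≤ E₁.indicator (fun _ => S) ω := by
      filter_upwards [hXn] with ω h
      by_cases h1 : ω ∈ E₁
      · simp only [hX'def, Set.indicator_of_mem h1,
          Set.indicator_of_notMem (by simpa using h1 : ω ∉ E₁ᶜ)]
        simpa using h
      · simp [hX'def, Set.indicator_of_notMem h1,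
          Set.indicator_of_mem (by simpa using h1 : ω ∈ E₁ᶜ)]
    calc ‖∫ ω, (X ω - X' ω)‖ ≤ ∫ ω, E₁.indicator (fun _ => S) ω :=
          norm_integral_le_of_norm_le ((integrable_const S).indicator hE₁) hbound
      _ = p1 * S := by rw [integral_indicator_const _ hE₁]; simp [hp1, mul_comm, measureReal_def]
      _ = S * p1 := mul_comm _ _
  -- |b - B| ≤ S * p2
  have hbB : |b - B| ≤ S * p2 := by
    have : b - B = ∫ ω, (Y ω - Y' ω) := (integral_sub hYi hY'i).symm
    rw [this]
    have hbound : ∀ᵐ ω, ‖Y ω - Y' ω‖ ≤ E₂.indicator (fun _ => S) ω := by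
      filter_upwards [hYn] with ω h
      by_cases h2 : ω ∈ E₂
      · simp only [hY'def, Set.indicator_of_mem h2,
          Set.indicator_of_notMem (by simpa using h2 : ω ∉ E₂ᶜ)]
        simpa using h
      · simp [hY'def, Set.indicator_of_notMem h2,
          Set.indicator_of_mem (by simpa using h2 : ω ∈ E₂ᶜ)]
    calc ‖∫ ω, (Y ω - Y' ω)‖ ≤ ∫ ω, E₂.indicator (fun _ => S) ω :=
          norm_integral_le_of_norm_le ((integrable_const S).indicator hE₂) hbound
      _ = p2 * S := by rw [integral_indicator_const _ hE₂]; simp [hp2, mul_comm, measureReal_def]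
      _ = S * p2 := mul_comm _ _
  -- |∫XY - ∫X'Y'| ≤ S^2 p1 + S^2 p2
  have hX'Y'i : Integrable (fun ω => X' ω * Y' ω) := by
    refine (integrable_const (S * S)).mono' (hX'm.mul hY'm).aestronglyMeasurable ?_
    filter_upwards [hX'n, hY'n] with ω h1 h2
    simp only [norm_mul]
    exact mul_le_mul h1 h2 (norm_nonneg _) hS.le
  have hI : |(∫ ω, X ω * Y ω) - ∫ ω, X' ω * Y' ω| ≤ S ^ 2 * p1 + S ^ 2 * p2 := by
    have : (∫ ω, X ω * Y ω) - ∫ ω, X' ω * Y' ω = ∫ ω, (X ω * Y ω - X' ω * Y' ω) :=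
      (integral_sub hXYi hX'Y'i).symm
    rw [this]
    have hbound : ∀ᵐ ω, ‖X ω * Y ω - X' ω * Y' ω‖
        ≤ E₁.indicator (fun _ => S ^ 2) ω + E₂.indicator (fun _ => S ^ 2) ω := by
      filter_upwards [hXn, hYn] with ω h1 h2
      have hXYb : |X ω * Y ω| ≤ S ^ 2 := by
        rw [abs_mul, sq]
        exact mul_le_mul h1 h2 (abs_nonneg _) hS.le
      have hnn2 : (0:ℝ) ≤ E₂.indicator (fun _ => S ^ 2) ω :=
        Set.indicator_nonneg (fun _ _ => sq_nonneg S) ω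
      have hnn1 : (0:ℝ) ≤ E₁.indicator (fun _ => S ^ 2) ω :=
        Set.indicator_nonneg (fun _ _ => sq_nonneg S) ω
      by_cases he1 : ω ∈ E₁
      · have hz : X' ω = 0 := by
          simp [hX'def, Set.indicator_of_notMem (by simpa using he1 : ω ∉ E₁ᶜ)]
        have heq : ‖X ω * Y ω - X' ω * Y' ω‖ = |X ω * Y ω| := by rw [hz]; simp [abs_mul]
        rw [heq, Set.indicator_of_mem he1]
        linarith
      · by_cases he2 : ω ∈ E₂
        · have hz : Y' ω = 0 := by
            simp [hY'def, Set.indicator_of_notMem (by simpa using he2 : ω ∉ E₂ᶜ)]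
          have heq : ‖X ω * Y ω - X' ω * Y' ω‖ = |X ω * Y ω| := by rw [hz]; simp [abs_mul]
          rw [heq, Set.indicator_of_mem he2]
          linarith
        · simp [hX'def, hY'def, Set.indicator_of_mem (by simpa using he1 : ω ∈ E₁ᶜ),
            Set.indicator_of_mem (by simpa using he2 : ω ∈ E₂ᶜ),
            Set.indicator_of_notMem he1, Set.indicator_of_notMem he2]
    calc ‖∫ ω, (X ω * Y ω - X' ω * Y' ω)‖
        ≤ ∫ ω, (E₁.indicator (fun _ => S ^ 2) ω + E₂.indicator (fun _ => S ^ 2) ω) :=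
          norm_integral_le_of_norm_le
            (((integrable_const _).indicator hE₁).add ((integrable_const _).indicator hE₂)) hbound
      _ = S ^ 2 * p1 + S ^ 2 * p2 := by
          rw [integral_add ((integrable_const _).indicator hE₁)
            ((integrable_const _).indicator hE₂),
            integral_indicator_const _ hE₁, integral_indicator_const _ hE₂]
          simp [hp1, hp2, mul_comm, measureReal_def]
  -- combine
  rw [h1]
  have hsplit : |(∫ ω, X ω * Y ω) - a * b|
      ≤ (S ^ 2 * p1 + S ^ 2 * p2) + (S * (S * p2) + (S * p1) * S) := by
    have h2 : |A * B - a * b| ≤ S * (S * p2) + (S * p1) * S := by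
      calc |A * B - a * b| = |A * (B - b) + (A - a) * b| := by ring_nf
        _ ≤ |A * (B - b)| + |(A - a) * b| := abs_add_le _ _
        _ = |A| * |B - b| + |A - a| * |b| := by rw [abs_mul, abs_mul]
        _ ≤ S * (S * p2) + (S * p1) * S := by
            have e1 : |B - b| ≤ S * p2 := by rwa [abs_sub_comm] at hbB
            have e2 : |A - a| ≤ S * p1 := by rwa [abs_sub_comm] at haA
            have := abs_nonneg A; have := abs_nonneg b
            nlinarith [abs_nonneg (B - b), abs_nonneg (A - a)]
    calc |(∫ ω, X ω * Y ω) - a * b|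
        = |((∫ ω, X ω * Y ω) - ∫ ω, X' ω * Y' ω) + (A * B - a * b)| := by
          rw [hAB]; ring_nf
      _ ≤ |(∫ ω, X ω * Y ω) - ∫ ω, X' ω * Y' ω| + |A * B - a * b| := abs_add_le _ _
      _ ≤ (S ^ 2 * p1 + S ^ 2 * p2) + (S * (S * p2) + (S * p1) * S) := add_le_add hI h2
  have hm1 : p1 ≤ max p1 p2 := le_max_left _ _
  have hm2 : p2 ≤ max p1 p2 := le_max_right _ _
  nlinarith [sq_nonneg S, hsplit]
end
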